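/- Under assumptions (R1)-(R4) and the Bregman scaling condition with exponent θ ∈ [0,1), the symmetric Bregman distance satisfies D(u^δ_α, u†) ≤ inf over (ζ1,ζ2) ∈ (0,∞)² of [ (ζ1 + (δ/α)ζ2)^{1/(1−θ)} C_θ(u^δ_α, u†)^{1/(1−θ)} + (1/(1−θ)) e_{α,ζ1}(μ†) + (δ/(α(1−θ))) e_{δ,ζ2}(η) ]. -/

import Mathlib

open scoped RealInnerProductSpace

/-- The variational functional `J^δ_α(u) = ½‖Ku‖²_Y − ⟨Ku, f^δ⟩_{Z×Z*} + α R(u)`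
with `f^δ = Ku† + δn`, the pairing of `Ku` with `Ku† ∈ Z ⊂ Y ⊂ Z*` being the
`Y`-inner product (`Z` embedded in `Y` via `j`), and `n ∈ Z*`. -/
noncomputable def Jfun {X Y Z : Type*} [NormedAddCommGroup X] [NormedSpace ℝ X]
    [NormedAddCommGroup Y] [InnerProductSpace ℝ Y]
    [NormedAddCommGroup Z] [NormedSpace ℝ Z]
    (j : Z →L[ℝ] Y) (K : X →L[ℝ] Z) (R : X → EReal)
    (udag : X) (n : Z →L[ℝ] ℝ) (δ α : ℝ) (u : X) : EReal :=
  (((1 : ℝ) / 2 * ‖j (K u)‖ ^ 2 - (⟪j (K u), j (K udag)⟫ + δ * n (K u)) : ℝ) : EReal)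
    + (α : EReal) * R u

/-- The convex conjugate `R*(q) = sup_u (⟨q,u⟩ − R(u))`, valued in `EReal`. -/
noncomputable def conjR {X : Type*} [NormedAddCommGroup X] [NormedSpace ℝ X]
    (R : X → EReal) (q : X →L[ℝ] ℝ) : EReal :=
  ⨆ u : X, ((q u : EReal) - R u)

/-- `K* w ∈ X*` for `w ∈ Y`: the functional `u ↦ ⟪w, (j ∘ K) u⟫_Y`. -/
noncomputable def KstarY {X Y Z : Type*} [NormedAddCommGroup X] [NormedSpace ℝ X]
    [NormedAddCommGroup Y] [InnerProductSpace ℝ Y]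
    [NormedAddCommGroup Z] [NormedSpace ℝ Z]
    (j : Z →L[ℝ] Y) (K : X →L[ℝ] Z) (w : Y) : X →L[ℝ] ℝ :=
  (innerSL ℝ w).comp (j.comp K)

/-- The approximate-source-condition functional
`e_{α,ζ}(ϑ) = inf_{w ∈ Y} [ζ R*((K*w − ϑ)/ζ) + (α/2)‖w‖²_Y]`. -/
noncomputable def efun {X Y Z : Type*} [NormedAddCommGroup X] [NormedSpace ℝ X]
    [NormedAddCommGroup Y] [InnerProductSpace ℝ Y]
    [NormedAddCommGroup Z] [NormedSpace ℝ Z]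
    (j : Z →L[ℝ] Y) (K : X →L[ℝ] Z) (R : X → EReal)
    (α ζ : ℝ) (ϑ : X →L[ℝ] ℝ) : EReal :=
  ⨅ w : Y, ((ζ : EReal) * conjR R (ζ⁻¹ • (KstarY j K w - ϑ))
    + ((α / 2 * ‖w‖ ^ 2 : ℝ) : EReal))

set_option maxHeartbeats 2000000 in
/-- Theorem 2.9 (case `θ < 1`): under (R1)-(R4) and the Bregman scaling condition
`R(u−v) ≤ C_θ(u,v) D(u,v)^θ` with `θ ∈ [0,1)`, the symmetric Bregman distance satisfies
`D(u^δ_α,u†) ≤ inf_{ζ1,ζ2 > 0} [(ζ1 + (δ/α)ζ2)^{1/(1−θ)} C_θ(u^δ_α,u†)^{1/(1−θ)}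
  + (1/(1−θ)) e_{α,ζ1}(μ†) + (δ/(α(1−θ))) e_{δ,ζ2}(η)]`. -/
theorem stmt5
    {X Y Z : Type*}
    [NormedAddCommGroup X] [NormedSpace ℝ X] [CompleteSpace X]
    [TopologicalSpace.SeparableSpace X]
    [NormedAddCommGroup Y] [InnerProductSpace ℝ Y] [CompleteSpace Y]
    [NormedAddCommGroup Z] [NormedSpace ℝ Z]
    (j : Z →L[ℝ] Y) (hjinj : Function.Injective j) (hjdense : DenseRange j)
    (K : X →L[ℝ] Z)
    (R : X → EReal)
    -- convexity of `R`
    (hRconv : ∀ u v : X, ∀ t : ℝ, 0 ≤ t → t ≤ 1 →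
      R (t • u + (1 - t) • v) ≤ (t : EReal) * R u + ((1 - t : ℝ) : EReal) * R v)
    -- (R1)+(R2): there is a topology `τ` on `X` in which `K` is continuous, `R` is
    -- sequentially lower semicontinuous, and sublevel sets of `R` are sequentially compact
    (hR12 : ∃ τ : TopologicalSpace X,
      (@Continuous X Z τ _ fun u => K u) ∧
      (∀ (u : ℕ → X) (x : X),
        Filter.Tendsto u Filter.atTop (@nhds X τ x) →
        R x ≤ Filter.liminf (fun k => R (u k)) Filter.atTop) ∧
      (∀ ρ : ℝ, @IsSeqCompact X τ {u : X | R u ≤ (ρ : EReal)}))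
    -- (R3): the convex conjugate `R*` is finite on a ball around `0` in `X*`
    (hR3 : ∃ ε : ℝ, 0 < ε ∧ ∀ q : X →L[ℝ] ℝ, ‖q‖ ≤ ε → conjR R q < ⊤)
    -- (R4): symmetry
    (hR4 : ∀ u : X, R (-u) = R u)
    (udag : X) (n : Z →L[ℝ] ℝ) (δ α : ℝ) (hδ : 0 < δ) (hα : 0 < α)
    -- `μ† ∈ ∂R(u†)`
    (μdag : X →L[ℝ] ℝ)
    (hμdag : ∀ v : X, R udag + ((μdag (v - udag) : ℝ) : EReal) ≤ R v)
    -- `u^δ_α` is a minimizer of `J^δ_α` and `μ^δ_α ∈ ∂R(u^δ_α)` satisfies the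
    -- optimality condition `K*(K u^δ_α − f^δ) + α μ^δ_α = 0`
    (uδα : X) (μδα : X →L[ℝ] ℝ)
    (hmin : ∀ u : X, Jfun j K R udag n δ α uδα ≤ Jfun j K R udag n δ α u)
    (hsub : ∀ v : X, R uδα + ((μδα (v - uδα) : ℝ) : EReal) ≤ R v)
    (hopt : ∀ u : X,
      ⟪j (K u), j (K uδα) - j (K udag)⟫ - δ * n (K u) + α * μδα u = 0)
    -- Bregman scaling condition with exponent `θ ∈ [0,1)`
    (θ : ℝ) (hθ0 : 0 ≤ θ) (hθ1 : θ < 1)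
    (Cθ : X → X → ℝ) (hCθ : ∀ u v : X, 0 ≤ Cθ u v)
    (hscal : ∀ (u v : X) (μu μv : X →L[ℝ] ℝ),
      (∀ x : X, R u + ((μu (x - u) : ℝ) : EReal) ≤ R x) →
      (∀ x : X, R v + ((μv (x - v) : ℝ) : EReal) ≤ R x) →
      R (u - v) ≤ ((Cθ u v * ((μu - μv) (u - v)) ^ θ : ℝ) : EReal)) :
    ((((μδα - μdag) (uδα - udag)) : ℝ) : EReal)
      ≤ ⨅ (ζ1 : ℝ) (_ : 0 < ζ1) (ζ2 : ℝ) (_ : 0 < ζ2),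
          (((ζ1 + δ / α * ζ2) ^ ((1:ℝ) / (1 - θ))
              * Cθ uδα udag ^ ((1:ℝ) / (1 - θ)) : ℝ) : EReal)
            + ((1 / (1 - θ) : ℝ) : EReal) * efun j K R α ζ1 μdag
            + ((δ / (α * (1 - θ)) : ℝ) : EReal) * efun j K R δ ζ2 (n.comp K) := by
  refine le_iInf fun ζ1 => le_iInf fun hζ1 => le_iInf fun ζ2 => le_iInf fun hζ2 => ?_
  have h1θ : 0 < 1 - θ := by linarith
  have hc1 : 0 < 1 / (1 - θ) := by positivity
  have hc2 : 0 < δ / (α * (1 - θ)) := by positivity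
  by_cases hbot : ∃ u0 : X, R u0 = ⊥
  · obtain ⟨u0, hu0⟩ := hbot
    have hconj : ∀ q : X →L[ℝ] ℝ, conjR R q = ⊤ := fun q => by
      refine top_le_iff.mp (le_trans ?_ (le_iSup (fun u => ((q u : EReal) - R u)) u0))
      rw [hu0, EReal.coe_sub_bot]
    have hef : ∀ (c ζ : ℝ), 0 < ζ → ∀ ϑ : X →L[ℝ] ℝ, efun j K R c ζ ϑ = ⊤ := by
      intro c ζ hζ ϑ
      refine top_le_iff.mp (le_iInf fun w => ?_)
      rw [hconj, EReal.coe_mul_top_of_pos hζ,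
        EReal.top_add_of_ne_bot (EReal.coe_ne_bot _)]
    rw [hef α ζ1 hζ1 μdag, hef δ ζ2 hζ2 _, EReal.coe_mul_top_of_pos hc1,
      EReal.coe_mul_top_of_pos hc2, EReal.add_top_of_ne_bot (EReal.coe_ne_bot _),
      EReal.top_add_of_ne_bot (by simp)]
    exact le_top
  push_neg at hbot
  set e : X := uδα - udag with he
  set d : ℝ := (μδα - μdag) e with hd
  have hKe : j (K e) = j (K uδα) - j (K udag) := by rw [he, map_sub, map_sub]
  set g : Y := j (K e) with hg
  have hde : d = μδα e - μdag e := by rw [hd, ContinuousLinearMap.sub_apply]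
  have hopt' : ‖g‖ ^ 2 - δ * n (K e) + α * μδα e = 0 := by
    have h := hopt e
    rw [← hKe, real_inner_self_eq_norm_sq] at h
    rw [← hg] at h
    linarith
  have hscal' := hscal uδα udag μδα μdag hsub hμdag
  rw [← he, ← hd] at hscal'
  have hRe_ne_top : R e ≠ ⊤ := ne_top_of_le_ne_top (EReal.coe_ne_top _) hscal'
  obtain ⟨re, hre⟩ : ∃ r : ℝ, R e = (r : EReal) :=
    ⟨(R e).toReal, (EReal.coe_toReal hRe_ne_top (hbot e)).symm⟩
  have hre_le : re ≤ Cθ uδα udag * d ^ θ := by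
    rw [hre] at hscal'; exact_mod_cast hscal'
  have hRene : R (-e) = (re : EReal) := by rw [hR4, hre]
  obtain ⟨rdag, hrdag⟩ : ∃ r : ℝ, R udag = (r : EReal) := by
    refine ⟨(R udag).toReal, (EReal.coe_toReal ?_ (hbot _)).symm⟩
    intro h
    have h2 := hμdag e
    rw [h, EReal.top_add_of_ne_bot (EReal.coe_ne_bot _), hre] at h2
    exact (EReal.coe_lt_top re).not_ge h2
  obtain ⟨rδα, hrδα⟩ : ∃ r : ℝ, R uδα = (r : EReal) := by
    refine ⟨(R uδα).toReal, (EReal.coe_toReal ?_ (hbot _)).symm⟩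
    intro h
    have h2 := hsub e
    rw [h, EReal.top_add_of_ne_bot (EReal.coe_ne_bot _), hre] at h2
    exact (EReal.coe_lt_top re).not_ge h2
  have hd0 : 0 ≤ d := by
    have h1 := hsub udag
    have h2 := hμdag uδα
    rw [hrδα, hrdag] at h1 h2
    rw [← he] at h2
    have hneg : udag - uδα = -e := by rw [he, neg_sub]
    rw [hneg, map_neg] at h1
    have h1' : rδα + -μδα e ≤ rdag := by exact_mod_cast h1
    have h2' : rdag + μdag e ≤ rδα := by exact_mod_cast h2
    rw [hde]; linarith
  have hconjLB : ∀ q : X →L[ℝ] ℝ, ((q e - re : ℝ) : EReal) ≤ conjR R q := fun q => by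
    refine le_trans ?_ (le_iSup (fun u => ((q u : EReal) - R u)) e)
    rw [hre]
    exact le_of_eq (EReal.coe_sub _ _)
  have hconjLB' : ∀ q : X →L[ℝ] ℝ, ((-q e - re : ℝ) : EReal) ≤ conjR R q := fun q => by
    refine le_trans ?_ (le_iSup (fun u => ((q u : EReal) - R u)) (-e))
    rw [map_neg, hRene]
    exact le_of_eq (by push_cast; ring)
  have main : ∀ (c ζ : ℝ), 0 < c → 0 < ζ → ∀ ϑ : X →L[ℝ] ℝ,
      (∀ w : Y, ((-(‖g‖ ^ 2 / (2 * c)) - |ϑ e| - ζ * re : ℝ) : EReal)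
        ≤ (ζ : EReal) * conjR R (ζ⁻¹ • (KstarY j K w - ϑ)) + ((c / 2 * ‖w‖ ^ 2 : ℝ) : EReal))
      ∧ (∀ r ε : ℝ, 0 < ε → efun j K R c ζ ϑ = (r : EReal) →
        ∃ (w : Y) (s : ℝ),
          ζ⁻¹ * (⟪w, g⟫ - ϑ e) - re ≤ s ∧
          -(ζ⁻¹ * (⟪w, g⟫ - ϑ e)) - re ≤ s ∧
          ζ * s + c / 2 * ‖w‖ ^ 2 ≤ r + ε) := by
    intro c ζ hc hζ ϑ
    have happ : ∀ w : Y, (ζ⁻¹ • (KstarY j K w - ϑ)) e = ζ⁻¹ * (⟪w, g⟫ - ϑ e) := by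
      intro w
      rw [ContinuousLinearMap.smul_apply, ContinuousLinearMap.sub_apply]
      rw [show KstarY j K w e = ⟪w, g⟫ from rfl]
      rfl
    have hLB : ∀ w : Y, ((ζ⁻¹ * (⟪w, g⟫ - ϑ e) - re : ℝ) : EReal)
        ≤ conjR R (ζ⁻¹ • (KstarY j K w - ϑ)) := fun w => by
      have h := hconjLB (ζ⁻¹ • (KstarY j K w - ϑ))
      rwa [happ w] at h
    have hLB' : ∀ w : Y, ((-(ζ⁻¹ * (⟪w, g⟫ - ϑ e)) - re : ℝ) : EReal)
        ≤ conjR R (ζ⁻¹ • (KstarY j K w - ϑ)) := fun w => by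
      have h := hconjLB' (ζ⁻¹ • (KstarY j K w - ϑ))
      rwa [happ w] at h
    constructor
    · intro w
      by_cases hs : conjR R (ζ⁻¹ • (KstarY j K w - ϑ)) = ⊤
      · rw [hs, EReal.coe_mul_top_of_pos hζ, EReal.top_add_of_ne_bot (EReal.coe_ne_bot _)]
        exact le_top
      · obtain ⟨s, hsr⟩ : ∃ s : ℝ, conjR R (ζ⁻¹ • (KstarY j K w - ϑ)) = (s : EReal) :=
          ⟨_, (EReal.coe_toReal hs ((lt_of_lt_of_le (EReal.bot_lt_coe _) (hLB w)).ne')).symm⟩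
        rw [hsr, ← EReal.coe_mul, ← EReal.coe_add, EReal.coe_le_coe_iff]
        have hs1 : ζ⁻¹ * (⟪w, g⟫ - ϑ e) - re ≤ s := by
          have h := hLB w; rw [hsr] at h; exact_mod_cast h
        have hs1' : ⟪w, g⟫ - ϑ e - ζ * re ≤ ζ * s := by
          have h2 := mul_le_mul_of_nonneg_left hs1 hζ.le
          have h3 : ζ * (ζ⁻¹ * (⟪w, g⟫ - ϑ e) - re) = ⟪w, g⟫ - ϑ e - ζ * re := by
            field_simp
          rw [h3] at h2; linarith
        have key2 : 0 ≤ c / 2 * ‖w‖ ^ 2 - ‖w‖ * ‖g‖ + ‖g‖ ^ 2 / (2 * c) := by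
          have h4 : c / 2 * ‖w‖ ^ 2 - ‖w‖ * ‖g‖ + ‖g‖ ^ 2 / (2 * c)
              = (c * ‖w‖ - ‖g‖) ^ 2 / (2 * c) := by field_simp; ring
          rw [h4]; positivity
        have hCS := (abs_le.mp (abs_real_inner_le_norm w g)).1
        have habs := le_abs_self (ϑ e)
        linarith
    · intro r ε hε hefr
      have hlt : efun j K R c ζ ϑ < ((r + ε : ℝ) : EReal) := by
        rw [hefr]; exact_mod_cast (lt_add_of_pos_right r hε)
      rw [efun] at hlt
      obtain ⟨w, hw⟩ := iInf_lt_iff.mp hlt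
      have hs_ne_top : conjR R (ζ⁻¹ • (KstarY j K w - ϑ)) ≠ ⊤ := by
        intro h
        rw [h, EReal.coe_mul_top_of_pos hζ,
          EReal.top_add_of_ne_bot (EReal.coe_ne_bot _)] at hw
        exact not_top_lt hw
      obtain ⟨s, hsr⟩ : ∃ s : ℝ, conjR R (ζ⁻¹ • (KstarY j K w - ϑ)) = (s : EReal) :=
        ⟨_, (EReal.coe_toReal hs_ne_top ((lt_of_lt_of_le (EReal.bot_lt_coe _) (hLB w)).ne')).symm⟩
      refine ⟨w, s, ?_, ?_, ?_⟩
      · have h := hLB w; rw [hsr] at h; exact_mod_cast h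
      · have h := hLB' w; rw [hsr] at h; exact_mod_cast h
      · rw [hsr, ← EReal.coe_mul, ← EReal.coe_add, EReal.coe_lt_coe_iff] at hw
        linarith
  have hE1lb := le_iInf (main α ζ1 hα hζ1 μdag).1
  have hE2lb := le_iInf (main δ ζ2 hδ hζ2 (n.comp K)).1
  rw [show (⨅ w : Y, ((ζ1 : EReal) * conjR R (ζ1⁻¹ • (KstarY j K w - μdag))
      + ((α / 2 * ‖w‖ ^ 2 : ℝ) : EReal))) = efun j K R α ζ1 μdag from rfl] at hE1lb
  rw [show (⨅ w : Y, ((ζ2 : EReal) * conjR R (ζ2⁻¹ • (KstarY j K w - n.comp K))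
      + ((δ / 2 * ‖w‖ ^ 2 : ℝ) : EReal))) = efun j K R δ ζ2 (n.comp K) from rfl] at hE2lb
  have hE1nb : efun j K R α ζ1 μdag ≠ ⊥ :=
    (lt_of_lt_of_le (EReal.bot_lt_coe _) hE1lb).ne'
  have hE2nb : efun j K R δ ζ2 (n.comp K) ≠ ⊥ :=
    (lt_of_lt_of_le (EReal.bot_lt_coe _) hE2lb).ne'
  have hmulnb : ∀ (c : ℝ), 0 < c → ∀ x : EReal, x ≠ ⊥ → (c : EReal) * x ≠ ⊥ := by
    intro c hc x hx
    induction x using EReal.rec with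
    | bot => exact absurd rfl hx
    | coe y => rw [← EReal.coe_mul]; exact EReal.coe_ne_bot _
    | top => rw [EReal.coe_mul_top_of_pos hc]; simp
  by_cases hE1top : efun j K R α ζ1 μdag = ⊤
  · rw [hE1top, EReal.coe_mul_top_of_pos hc1, EReal.add_top_of_ne_bot (EReal.coe_ne_bot _),
      EReal.top_add_of_ne_bot (hmulnb _ hc2 _ hE2nb)]
    exact le_top
  by_cases hE2top : efun j K R δ ζ2 (n.comp K) = ⊤
  · rw [hE2top, EReal.coe_mul_top_of_pos hc2, EReal.add_top_of_ne_bot ?hne]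
    case hne =>
      rw [Ne, EReal.add_eq_bot_iff]
      push_neg
      exact ⟨EReal.coe_ne_bot _, hmulnb _ hc1 _ hE1nb⟩
    exact le_top
  obtain ⟨r1, hr1⟩ : ∃ r : ℝ, efun j K R α ζ1 μdag = (r : EReal) :=
    ⟨_, (EReal.coe_toReal hE1top hE1nb).symm⟩
  obtain ⟨r2, hr2⟩ : ∃ r : ℝ, efun j K R δ ζ2 (n.comp K) = (r : EReal) :=
    ⟨_, (EReal.coe_toReal hE2top hE2nb).symm⟩
  rw [hr1, hr2, ← EReal.coe_mul, ← EReal.coe_mul, ← EReal.coe_add, ← EReal.coe_add,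
    EReal.coe_le_coe_iff]
  refine le_of_forall_sub_le fun ε hε => ?_
  obtain ⟨w1, s1, hs1a, _, hs1c⟩ :=
    (main α ζ1 hα hζ1 μdag).2 r1 (ε * (1 - θ) / 2) (by positivity) hr1
  obtain ⟨w2, s2, _, hs2b, hs2c⟩ :=
    (main δ ζ2 hδ hζ2 (n.comp K)).2 r2 (ε * α * (1 - θ) / (2 * δ)) (by positivity) hr2
  rw [ContinuousLinearMap.comp_apply] at hs2b
  -- multiplied Fenchel-Young bounds
  have h1 : ⟪w1, g⟫ - μdag e - ζ1 * re ≤ ζ1 * s1 := by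
    have h2 := mul_le_mul_of_nonneg_left hs1a hζ1.le
    have h3 : ζ1 * (ζ1⁻¹ * (⟪w1, g⟫ - μdag e) - re) = ⟪w1, g⟫ - μdag e - ζ1 * re := by
      field_simp
    rw [h3] at h2; linarith
  have h2 : -(⟪w2, g⟫ - n (K e)) - ζ2 * re ≤ ζ2 * s2 := by
    have h2' := mul_le_mul_of_nonneg_left hs2b hζ2.le
    have h3 : ζ2 * (-(ζ2⁻¹ * (⟪w2, g⟫ - n (K e))) - re)
        = -(⟪w2, g⟫ - n (K e)) - ζ2 * re := by field_simp
    rw [h3] at h2'; linarith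
  have quad : -‖g‖ ^ 2 + δ * ⟪w2, g⟫ - α * ⟪w1, g⟫
      ≤ δ ^ 2 / 2 * ‖w2‖ ^ 2 + α ^ 2 / 2 * ‖w1‖ ^ 2 := by
    have u2 := real_inner_le_norm w2 g
    have l1 := (abs_le.mp (abs_real_inner_le_norm w1 g)).1
    linarith [sq_nonneg (δ * ‖w2‖ + α * ‖w1‖ - 2 * ‖g‖), sq_nonneg (δ * ‖w2‖ - α * ‖w1‖),
      mul_le_mul_of_nonneg_left u2 hδ.le, mul_le_mul_of_nonneg_left l1 hα.le]
  -- combine: α d ≤ α(r1+ε1) + δ(r2+ε2) + (αζ1+δζ2) re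
  have step2 : α * d ≤ α * (r1 + ε * (1 - θ) / 2) + δ * (r2 + ε * α * (1 - θ) / (2 * δ))
      + (α * ζ1 + δ * ζ2) * re := by
    have m1 := mul_le_mul_of_nonneg_left h1 hα.le
    have m2 := mul_le_mul_of_nonneg_left h2 hδ.le
    have m3 := mul_le_mul_of_nonneg_left hs1c hα.le
    have m4 := mul_le_mul_of_nonneg_left hs2c hδ.le
    have hαμ : α * μδα e = δ * n (K e) - ‖g‖ ^ 2 := by linarith
    have hda : α * d = δ * n (K e) - ‖g‖ ^ 2 - α * μdag e := by
      rw [hde]; rw [mul_sub, hαμ]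
    nlinarith [m1, m2, m3, m4, quad, hda]
  -- Young's inequality
  set C : ℝ := Cθ uδα udag with hC
  have hC0 : 0 ≤ C := hCθ _ _
  set Λ : ℝ := ζ1 + δ / α * ζ2 with hΛ
  have hΛ0 : 0 < Λ := by rw [hΛ]; positivity
  have ha0 : 0 ≤ Λ * C := mul_nonneg hΛ0.le hC0
  have young : Λ * C * d ^ θ ≤ (1 - θ) * (Λ * C) ^ ((1:ℝ) / (1 - θ)) + θ * d := by
    have h := Real.geom_mean_le_arith_mean2_weighted h1θ.le hθ0
      (Real.rpow_nonneg ha0 ((1:ℝ) / (1 - θ))) hd0 (by ring)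
    have hk : ((1:ℝ) / (1 - θ)) * (1 - θ) = 1 := by field_simp
    rwa [← Real.rpow_mul ha0, hk, Real.rpow_one] at h
  have hαΛ : α * Λ = α * ζ1 + δ * ζ2 := by rw [hΛ]; field_simp
  clear_value e d g C Λ
  have step3 : (α * ζ1 + δ * ζ2) * re ≤ α * (Λ * C * d ^ θ) := by
    rw [← hαΛ]
    have := mul_le_mul_of_nonneg_left hre_le (mul_pos hα hΛ0).le
    calc α * Λ * re ≤ α * Λ * (C * d ^ θ) := this
      _ = α * (Λ * C * d ^ θ) := by ring
  have step4 : α * (1 - θ) * d ≤ α * (1 - θ) * (Λ * C) ^ ((1:ℝ) / (1 - θ))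
      + α * (r1 + ε * (1 - θ) / 2) + δ * (r2 + ε * α * (1 - θ) / (2 * δ)) := by
    have my := mul_le_mul_of_nonneg_left young hα.le
    linarith [step2, step3, my]
  -- divide by α(1-θ)
  have hrpow : (Λ * C) ^ ((1:ℝ) / (1 - θ))
      = Λ ^ ((1:ℝ) / (1 - θ)) * C ^ ((1:ℝ) / (1 - θ)) :=
    Real.mul_rpow hΛ0.le hC0
  have hpos : 0 < α * (1 - θ) := mul_pos hα h1θ
  rw [← mul_le_mul_iff_right₀ hpos]
  have hexp : α * (1 - θ) * (Λ ^ ((1:ℝ) / (1 - θ)) * C ^ ((1:ℝ) / (1 - θ))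
        + 1 / (1 - θ) * r1 + δ / (α * (1 - θ)) * r2)
      = α * (1 - θ) * (Λ * C) ^ ((1:ℝ) / (1 - θ)) + α * r1 + δ * r2 := by
    rw [hrpow]; field_simp
  have heps1 : α * (ε * (1 - θ) / 2) = α * (1 - θ) * ε / 2 := by ring
  have heps2 : δ * (ε * α * (1 - θ) / (2 * δ)) = α * (1 - θ) * ε / 2 := by
    field_simp
  rw [hexp]
  linarith [step4, heps1, heps2]
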